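/- Let σ(x) = 1/(1 + exp(−x)) be the sigmoid function and let l, t, u be real numbers with l < t, 0 < t, and t ≤ u, such that σ(t)·(1 − σ(t)) = (σ(t) − σ(l))/(t − l), i.e. the derivative of σ at t equals the slope of the chord through (l, σ(l)) and (t, σ(t)). Define φ : [l, u] → ℝ piecewise by φ(x) = σ(l) + ((σ(t) − σ(l))/(t − l))·(x − l) for x ∈ [l, t] and φ(x) = σ(x) for x ∈ [t, u]. Then φ is concave on [l, u] and σ(x) ≤ φ(x) for every x ∈ [l, u]. -/

import Mathlib

open Set

/-- The sigmoid function. -/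
noncomputable def sig (x : ℝ) : ℝ := 1 / (1 + Real.exp (-x))

/-- The derivative of the sigmoid. -/
noncomputable def sig' (x : ℝ) : ℝ := Real.exp (-x) / (1 + Real.exp (-x)) ^ 2

lemma one_add_exp_pos (x : ℝ) : 0 < 1 + Real.exp (-x) := by positivity

lemma sig_hasDerivAt (x : ℝ) : HasDerivAt sig (sig' x) x := by
  have h1 : HasDerivAt (fun y : ℝ => 1 + Real.exp (-y)) (-Real.exp (-x)) x := by
    have := ((hasDerivAt_id x).neg.exp).const_add (1 : ℝ)
    simpa using this
  have h2 := h1.inv (ne_of_gt (one_add_exp_pos x))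
  have h3 : -(-Real.exp (-x)) / (1 + Real.exp (-x)) ^ 2 = sig' x := by
    rw [sig']; ring
  rw [← h3]
  have h4 : sig = fun y : ℝ => (1 + Real.exp (-y))⁻¹ := by
    funext y; rw [sig, one_div]
  rw [h4]
  exact h2

lemma sig'_eq_cosh (x : ℝ) : sig' x = 1 / (2 * Real.cosh x + 2) := by
  have h1 : (1 : ℝ) + Real.exp (-x) ≠ 0 := ne_of_gt (one_add_exp_pos x)
  have h2 : (2 : ℝ) * Real.cosh x + 2 ≠ 0 := by positivity
  rw [sig', Real.cosh_eq]
  have hx : Real.exp (-x) * Real.exp x = 1 := by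
    rw [← Real.exp_add]; simp
  field_simp
  nlinarith [hx]

lemma sig'_lt_sig' {a b : ℝ} (h : |b| < |a|) : sig' a < sig' b := by
  rw [sig'_eq_cosh, sig'_eq_cosh]
  have hb : (0 : ℝ) < 2 * Real.cosh b + 2 := by positivity
  have hcosh : Real.cosh b < Real.cosh a := Real.cosh_lt_cosh.2 h
  apply one_div_lt_one_div_of_lt hb
  linarith

lemma sig'_le_sig' {a b : ℝ} (h : |a| ≤ |b|) : sig' b ≤ sig' a := by
  rw [sig'_eq_cosh, sig'_eq_cosh]
  have ha : (0 : ℝ) < 2 * Real.cosh a + 2 := by positivity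
  have hcosh : Real.cosh a ≤ Real.cosh b := Real.cosh_le_cosh.2 h
  apply one_div_le_one_div_of_le ha
  linarith

/-- The piecewise function: chord from `l` to `t`, then the sigmoid. -/
noncomputable def sigphi (l t : ℝ) (x : ℝ) : ℝ :=
  if x ≤ t then sig l + ((sig t - sig l) / (t - l)) * (x - l) else sig x

/-- Case 2 of the concave upper bound on the sigmoid: if the tangency condition
`σ'(t) = (σ t - σ l)/(t - l)` holds at a point `t > 0` with `l < t ≤ u`, then the function
consisting of the chord from `l` to `t` followed by the sigmoid itself is concave on
`[l, u]` and upper-bounds the sigmoid there. -/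
theorem sigmoid_piecewise_upper_bound (l t u : ℝ) (hlt : l < t) (ht : 0 < t) (htu : t ≤ u)
    (htangent :
      (1 / (1 + Real.exp (-t))) * (1 - 1 / (1 + Real.exp (-t)))
        = (1 / (1 + Real.exp (-t)) - 1 / (1 + Real.exp (-l))) / (t - l)) :
    ConcaveOn ℝ (Set.Icc l u)
      (fun x : ℝ =>
        if x ≤ t then
          1 / (1 + Real.exp (-l))
            + ((1 / (1 + Real.exp (-t)) - 1 / (1 + Real.exp (-l))) / (t - l)) * (x - l)
        else 1 / (1 + Real.exp (-x))) ∧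
    ∀ x ∈ Set.Icc l u,
      1 / (1 + Real.exp (-x))
        ≤ (if x ≤ t then
            1 / (1 + Real.exp (-l))
              + ((1 / (1 + Real.exp (-t)) - 1 / (1 + Real.exp (-l))) / (t - l)) * (x - l)
          else 1 / (1 + Real.exp (-x))) := by
  show ConcaveOn ℝ (Set.Icc l u) (sigphi l t) ∧ ∀ x ∈ Set.Icc l u, sig x ≤ sigphi l t x
  have hlu : l ≤ u := le_trans hlt.le htu
  -- the tangency condition, restated
  have hprod : sig t * (1 - sig t) = sig' t := by
    have := one_add_exp_pos t
    rw [sig, sig']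
    field_simp
    ring
  have hm : (sig t - sig l) / (t - l) = sig' t := by
    rw [← hprod]; exact htangent.symm
  have htl : (t : ℝ) - l ≠ 0 := by linarith
  have hm' : sig t - sig l = sig' t * (t - l) := by
    rw [← hm, div_mul_cancel₀ _ htl]
  -- the chord equals the tangent line at t
  have hL : ∀ w : ℝ, sig l + sig' t * (w - l) = sig t + sig' t * (w - t) := by
    intro w; nlinarith [hm']
  -- derivative facts for g x = sig x - sig' t * x
  have hg' : ∀ x : ℝ, HasDerivAt (fun y : ℝ => sig y - sig' t * y) (sig' x - sig' t) x := by
    intro x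
    have := (sig_hasDerivAt x).sub (((hasDerivAt_id x)).const_mul (sig' t))
    exact this.congr_deriv (by ring)
  have hgdiff : Differentiable ℝ (fun y : ℝ => sig y - sig' t * y) :=
    fun x => (hg' x).differentiableAt
  have hgderiv : ∀ x : ℝ, deriv (fun y : ℝ => sig y - sig' t * y) x = sig' x - sig' t :=
    fun x => (hg' x).deriv
  -- monotonicity of g on the three intervals
  have mono1 : MonotoneOn (fun y : ℝ => sig y - sig' t * y) (Icc (-t) t) := by
    apply StrictMonoOn.monotoneOn
    apply strictMonoOn_of_deriv_pos (convex_Icc _ _) hgdiff.continuous.continuousOn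
    intro x hx
    rw [interior_Icc] at hx
    rw [hgderiv]
    have habs : |x| < |t| := by
      rw [abs_of_pos ht]
      exact abs_lt.2 ⟨hx.1, hx.2⟩
    linarith [sig'_lt_sig' habs]
  have anti2 : AntitoneOn (fun y : ℝ => sig y - sig' t * y) (Icc t u) := by
    apply StrictAntiOn.antitoneOn
    apply strictAntiOn_of_deriv_neg (convex_Icc _ _) hgdiff.continuous.continuousOn
    intro x hx
    rw [interior_Icc] at hx
    rw [hgderiv]
    have habs : |t| < |x| := by
      rw [abs_of_pos ht, abs_of_pos (lt_trans ht hx.1)]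
      exact hx.1
    linarith [sig'_lt_sig' habs]
  have anti0 : AntitoneOn (fun y : ℝ => sig y - sig' t * y) (Iic (-t)) := by
    apply StrictAntiOn.antitoneOn
    apply strictAntiOn_of_deriv_neg (convex_Iic _) hgdiff.continuous.continuousOn
    intro x hx
    rw [interior_Iic, mem_Iio] at hx
    rw [hgderiv]
    have habs : |t| < |x| := by
      rw [abs_of_pos ht]
      calc t < -x := by linarith
        _ ≤ |x| := neg_le_abs x
    linarith [sig'_lt_sig' habs]
  -- key: g w ≤ g t on [l, u]
  have hKey : ∀ w ∈ Icc l u, sig w - sig' t * w ≤ sig t - sig' t * t := by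
    intro w hw
    rcases le_or_gt w t with h1 | h1
    · rcases le_or_gt (-t) w with h2 | h2
      · exact mono1 (mem_Icc.2 ⟨h2, h1⟩) (mem_Icc.2 ⟨by linarith, le_refl t⟩) h1
      · have hstep : (fun y : ℝ => sig y - sig' t * y) w ≤
            (fun y : ℝ => sig y - sig' t * y) l :=
          anti0 (mem_Iic.2 (by linarith [hw.1])) (mem_Iic.2 h2.le) hw.1
        simp only at hstep
        nlinarith [hm']
    · exact anti2 (mem_Icc.2 ⟨le_refl t, htu⟩) (mem_Icc.2 ⟨h1.le, hw.2⟩) h1.le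
  -- the tangent line at t upper-bounds sig on [l, u]
  have hUB : ∀ w ∈ Icc l u, sig w ≤ sig t + sig' t * (w - t) := by
    intro w hw
    have h1 := hKey w hw
    have h2 : sig' t * (w - t) = sig' t * w - sig' t * t := by ring
    rw [h2]; linarith
  -- concavity of sig on [t, u]
  have concS : ConcaveOn ℝ (Icc t u) sig := by
    apply AntitoneOn.concaveOn_of_deriv (convex_Icc t u)
    · exact (Differentiable.continuous fun x => (sig_hasDerivAt x).differentiableAt).continuousOn
    · exact fun x _ => ((sig_hasDerivAt x).differentiableAt).differentiableWithinAt
    · rw [interior_Icc]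
      intro p hp q hq hpq
      rw [(sig_hasDerivAt p).deriv, (sig_hasDerivAt q).deriv]
      apply sig'_le_sig'
      rw [abs_of_pos (lt_trans ht hp.1), abs_of_pos (lt_trans ht hq.1)]
      exact hpq
  -- description of sigphi
  have hφT : ∀ w : ℝ, w ≤ t → sigphi l t w = sig t + sig' t * (w - t) := by
    intro w hw
    rw [sigphi, if_pos hw, hm]
    exact hL w
  have hφS : ∀ w : ℝ, ¬ w ≤ t → sigphi l t w = sig w := by
    intro w hw; rw [sigphi, if_neg hw]
  have hσφ : ∀ w ∈ Icc l u, sig w ≤ sigphi l t w := by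
    intro w hw
    by_cases h : w ≤ t
    · rw [hφT w h]; exact hUB w hw
    · rw [hφS w h]
  have hφle : ∀ w ∈ Icc l u, sigphi l t w ≤ sig t + sig' t * (w - t) := by
    intro w hw
    by_cases h : w ≤ t
    · rw [hφT w h]
    · rw [hφS w h]; exact hUB w hw
  -- the mixed-case auxiliary inequality
  have haux : ∀ a b x y : ℝ, x ∈ Icc l u → y ∈ Icc l u → 0 ≤ a → 0 ≤ b → a + b = 1 →
      x ≤ t → t < y → t < a * x + b * y →
      a * (sig t + sig' t * (x - t)) + b * sig y ≤ sig (a * x + b * y) := by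
    intro a b x y hx hy ha hb hab hxt hty hz
    have hyt : (0 : ℝ) < y - t := by linarith
    set e : ℝ := a * (x - t) / (y - t) with he
    have he0 : e ≤ 0 := by
      apply div_nonpos_of_nonpos_of_nonneg _ hyt.le
      exact mul_nonpos_of_nonneg_of_nonpos ha (by linarith)
    have hea : a * (x - t) = e * (y - t) := by
      rw [he, div_mul_cancel₀ _ (ne_of_gt hyt)]
    have hc0 : 0 ≤ a - e := by linarith
    have h1 : (b + e) * (y - t) = a * x + b * y - t := by
      linear_combination -hea - t * hab
    have hd0 : 0 ≤ b + e := by nlinarith [h1, hz, hyt]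
    have hsum : (a - e) + (b + e) = 1 := by linarith
    have hzeq : (a - e) * t + (b + e) * y = a * x + b * y := by
      linear_combination -hea
    have hcon := concS.2 (mem_Icc.2 ⟨le_refl t, htu⟩) (mem_Icc.2 ⟨hty.le, hy.2⟩) hc0 hd0 hsum
    rw [smul_eq_mul, smul_eq_mul, smul_eq_mul, smul_eq_mul, hzeq] at hcon
    have hTy : sig y ≤ sig t + sig' t * (y - t) := hUB y hy
    have hkey : a * (sig t + sig' t * (x - t)) + b * sig y
        - ((a - e) * sig t + (b + e) * sig y)
        = e * ((sig t + sig' t * (y - t)) - sig y) := by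
      linear_combination sig' t * hea
    have hle : e * ((sig t + sig' t * (y - t)) - sig y) ≤ 0 :=
      mul_nonpos_of_nonpos_of_nonneg he0 (by linarith)
    linarith
  constructor
  · refine ⟨convex_Icc l u, ?_⟩
    intro x hx y hy a b ha hb hab
    simp only [smul_eq_mul]
    have hz : a * x + b * y ∈ Icc l u := by
      have := (convex_Icc l u) hx hy ha hb hab
      simpa using this
    by_cases hzt : a * x + b * y ≤ t
    · rw [hφT _ hzt]
      have h1 := hφle x hx
      have h2 := hφle y hy
      have hTid : a * (sig t + sig' t * (x - t)) + b * (sig t + sig' t * (y - t))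
          = sig t + sig' t * (a * x + b * y - t) := by
        linear_combination (sig t - sig' t * t) * hab
      nlinarith [mul_le_mul_of_nonneg_left h1 ha, mul_le_mul_of_nonneg_left h2 hb]
    · rw [hφS _ hzt]
      push_neg at hzt
      by_cases hxt : x ≤ t
      · have hyt : t < y := by
          by_contra hy'
          push_neg at hy'
          nlinarith [mul_le_mul_of_nonneg_left hxt ha, mul_le_mul_of_nonneg_left hy' hb]
        rw [hφT x hxt, hφS y (not_le.2 hyt)]
        exact haux a b x y hx hy ha hb hab hxt hyt hzt
      · push_neg at hxt
        by_cases hyt : y ≤ t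
        · rw [hφT y hyt, hφS x (not_le.2 hxt)]
          have hres := haux b a y x hy hx hb ha (by linarith) hyt hxt (by linarith)
          have hcomm : b * y + a * x = a * x + b * y := by ring
          rw [hcomm] at hres
          linarith
        · push_neg at hyt
          rw [hφS x (not_le.2 hxt), hφS y (not_le.2 hyt)]
          have := concS.2 (mem_Icc.2 ⟨hxt.le, hx.2⟩) (mem_Icc.2 ⟨hyt.le, hy.2⟩) ha hb hab
          simpa [smul_eq_mul] using this
  · exact hσφ
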